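/- Let g: ℝ^m → ℝ be defined by g(y) = f_*(C − A(y)) where f_* is the conjugate log-det barrier, A is a linear map with orthonormal columns (Aᵀ∘A = id), and Aᵀ(C) = 0. If ŷ minimizes g, then Aᵀ(X̂) = 0 where X̂ is the unique matrix in K satisfying P_V(X̂⁻¹) = C − A(ŷ), and moreover tr(X⁻¹ X̂) = n for any X ∈ K with P_V(X⁻¹) = C − A(y), y ∈ ℝ^m. -/

import Mathlib

open Matrix

private lemma log_ineq {s lam : ℝ} (hlam : 0 < lam) (hs : s ≤ 1/2) :
    s * (lam - 1) - (lam - 1 - Real.log lam) ≤ 2 * s ^ 2 := by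
  have h1s : 0 < 1 - s := by linarith
  have h1 : Real.log lam + Real.log (1 - s) ≤ lam * (1 - s) - 1 := by
    have := Real.log_le_sub_one_of_pos (mul_pos hlam h1s)
    rwa [Real.log_mul hlam.ne' h1s.ne'] at this
  have h2 : -Real.log (1 - s) ≤ (1 - s)⁻¹ - 1 := by
    have := Real.log_le_sub_one_of_pos (inv_pos.2 h1s)
    rwa [Real.log_inv] at this
  have hz : (1 - s) * (1 - s)⁻¹ = 1 := mul_inv_cancel₀ h1s.ne'
  have hz0 : 0 < (1 - s)⁻¹ := inv_pos.2 h1s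
  nlinarith [sq_nonneg s, mul_pos h1s h1s, mul_nonneg (sq_nonneg s) hz0.le,
    mul_nonneg (mul_nonneg (sq_nonneg s) hz0.le) h1s.le]

private lemma key_bound {n : ℕ} (E : Matrix (Fin n) (Fin n) ℝ) (M t : ℝ)
    (hM : ∑ j, ∑ k, |E j k| ≤ M) (ht0 : 0 ≤ t) (ht : t * M ≤ 1/2)
    {K : Matrix (Fin n) (Fin n) ℝ} (hK : K.PosDef) :
    t * ((E * K).trace - E.trace) - (K.trace - n - Real.log K.det) ≤ 2 * t ^ 2 * M ^ 2 * n := by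
  have hM0 : 0 ≤ M :=
    le_trans (Finset.sum_nonneg fun _ _ => Finset.sum_nonneg fun _ _ => abs_nonneg _) hM
  have hH := hK.1
  set U : Matrix (Fin n) (Fin n) ℝ := (hH.eigenvectorUnitary : Matrix (Fin n) (Fin n) ℝ) with hUdef
  set lam := hH.eigenvalues with hlamdef
  have hspec : K = U * diagonal lam * star U := by
    have := hH.spectral_theorem
    simpa [RCLike.ofReal_real_eq_id] using this
  have hU1 : U * star U = 1 := (Matrix.mem_unitaryGroup_iff).mp (hH.eigenvectorUnitary).2
  have hU2 : star U * U = 1 := (Matrix.mem_unitaryGroup_iff').mp (hH.eigenvectorUnitary).2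
  set e : Fin n → ℝ := fun i => (star U * E * U) i i with hedef
  have h1 : (E * K).trace = ∑ i, e i * lam i := by
    calc (E * K).trace = ((E * (U * diagonal lam)) * star U).trace := by
          rw [hspec, ← Matrix.mul_assoc]
      _ = (star U * (E * (U * diagonal lam))).trace := trace_mul_comm _ _
      _ = ((star U * E * U) * diagonal lam).trace := by
          rw [Matrix.mul_assoc, Matrix.mul_assoc]
      _ = ∑ i, e i * lam i := by
          simp [Matrix.trace, Matrix.diag, mul_diagonal, hedef]
  have h2 : E.trace = ∑ i, e i := by
    calc E.trace = ((U * star U) * E).trace := by rw [hU1, Matrix.one_mul]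
      _ = (U * (star U * E)).trace := by rw [Matrix.mul_assoc]
      _ = ((star U * E) * U).trace := trace_mul_comm _ _
      _ = ∑ i, e i := by simp [Matrix.trace, Matrix.diag, hedef]
  have h3 : K.trace = ∑ i, lam i := by
    rw [hspec, trace_mul_cycle, hU2, Matrix.one_mul, trace_diagonal]
  have h4 : Real.log K.det = ∑ i, Real.log (lam i) := by
    have hdet : K.det = ∏ i, lam i := by
      have := hH.det_eq_prod_eigenvalues
      simpa using this
    rw [hdet, Real.log_prod (fun i _ => (hK.eigenvalues_pos i).ne')]
  have hcol : ∀ i j, |U j i| ≤ 1 := by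
    intro i j
    have h := congrFun (congrFun hU2 i) i
    simp only [Matrix.mul_apply, Matrix.star_apply, star_trivial, Matrix.one_apply_eq] at h
    rw [← sq_le_one_iff_abs_le_one]
    calc (U j i)^2 = U j i * U j i := sq (U j i) ▸ by ring
      _ ≤ ∑ k, U k i * U k i :=
          Finset.single_le_sum (fun k _ => mul_self_nonneg (U k i)) (Finset.mem_univ j)
      _ = 1 := h
  have he : ∀ i, |e i| ≤ M := by
    intro i
    have hexp : e i = ∑ k, ∑ j, U j i * E j k * U k i := by
      simp only [hedef, Matrix.mul_apply, Matrix.star_apply, star_trivial, Finset.sum_mul]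
    rw [hexp]
    calc |∑ k, ∑ j, U j i * E j k * U k i|
        ≤ ∑ k, |∑ j, U j i * E j k * U k i| := Finset.abs_sum_le_sum_abs _ _
      _ ≤ ∑ k, ∑ j, |U j i * E j k * U k i| :=
          Finset.sum_le_sum fun k _ => Finset.abs_sum_le_sum_abs _ _
      _ ≤ ∑ k, ∑ j, |E j k| := by
          refine Finset.sum_le_sum fun k _ => Finset.sum_le_sum fun j _ => ?_
          rw [abs_mul, abs_mul]
          calc |U j i| * |E j k| * |U k i| ≤ 1 * |E j k| * 1 := by
                apply mul_le_mul (mul_le_mul (hcol i j) le_rfl (abs_nonneg _) one_pos.le)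
                  (hcol i k) (abs_nonneg _)
                positivity
            _ = |E j k| := by ring
      _ = ∑ j, ∑ k, |E j k| := by rw [Finset.sum_comm]
      _ ≤ M := hM
  rw [h1, h2, h3, h4]
  have hn : (n : ℝ) = ∑ _i : Fin n, (1 : ℝ) := by simp
  have hsplit : ∑ i, (t * (e i * lam i - e i) - (lam i - 1 - Real.log (lam i)))
      = t * ((∑ i, e i * lam i) - ∑ i, e i)
        - ((∑ i, lam i) - (n : ℝ) - ∑ i, Real.log (lam i)) := by
    rw [hn]; simp only [Finset.sum_sub_distrib]; rw [← Finset.mul_sum, Finset.sum_sub_distrib]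
  rw [← hsplit]
  have hbound : ∀ i : Fin n, t * (e i * lam i - e i) - (lam i - 1 - Real.log (lam i))
      ≤ 2 * t ^ 2 * M ^ 2 := by
    intro i
    have hs : t * e i ≤ 1/2 := by
      calc t * e i ≤ |t * e i| := le_abs_self _
        _ = t * |e i| := by rw [abs_mul, abs_of_nonneg ht0]
        _ ≤ t * M := by exact mul_le_mul_of_nonneg_left (he i) ht0
        _ ≤ 1/2 := ht
    have := log_ineq (hK.eigenvalues_pos i) hs
    have he2 : (e i)^2 ≤ M^2 := sq_le_sq' (by linarith [abs_le.mp (he i)]) (abs_le.mp (he i)).2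
    nlinarith [sq_nonneg t, mul_le_mul_of_nonneg_left he2 (sq_nonneg t)]
  calc ∑ i, (t * (e i * lam i - e i) - (lam i - 1 - Real.log (lam i)))
      ≤ ∑ _i : Fin n, 2 * t ^ 2 * M ^ 2 := Finset.sum_le_sum fun i _ => hbound i
    _ = 2 * t ^ 2 * M ^ 2 * n := by simp [mul_comm]

private lemma posDef_conj {n : ℕ} {W B : Matrix (Fin n) (Fin n) ℝ} (hW : W.PosDef)
    (hB : IsUnit B) : (Bᴴ * W * B).PosDef := by
  refine Matrix.PosDef.of_dotProduct_mulVec_pos (Matrix.isHermitian_conjTranspose_mul_mul B hW.1) fun x hx => ?_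
  have hInj : Function.Injective B.mulVec := Matrix.mulVec_injective_iff_isUnit.mpr hB
  have hBx : B *ᵥ x ≠ 0 := fun h => hx (hInj (by simpa using h))
  simpa only [star_mulVec, dotProduct_mulVec, vecMul_vecMul] using hW.dotProduct_mulVec_pos hBx

private lemma trace_pv_mul {n : ℕ} (V : Set (Fin n × Fin n)) [DecidablePred (· ∈ V)]
    (M W : Matrix (Fin n) (Fin n) ℝ) (hW : W.IsHermitian)
    (hWs : ∀ i j, (i, j) ∉ V → W i j = 0) :
    ((Matrix.of fun i j => if (i, j) ∈ V then M i j else 0) * W).trace = (M * W).trace := by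
  simp only [Matrix.trace, Matrix.diag, Matrix.mul_apply, Matrix.of_apply]
  refine Finset.sum_congr rfl fun i _ => Finset.sum_congr rfl fun j _ => ?_
  by_cases h : (i, j) ∈ V
  · simp [h]
  · have hji : W j i = W i j := by simpa using hW.apply i j
    simp [h, hji, hWs i j h]


set_option maxHeartbeats 1600000 in
/-- Dual MDMC problem: `g(y) = f_*(C − A(y))` with `f_*` the conjugate log-det barrier
on the sparsity pattern `V`, `A` linear with orthonormal columns (`Aᵀ∘A = id`) and
`Aᵀ(C) = 0`. If `ŷ` minimizes `g`, then `Aᵀ(X̂) = 0`, where `X̂ ∈ K` is the unique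
matrix with `P_V(X̂⁻¹) = C − A(ŷ)`; moreover `tr(X⁻¹ X̂) = n` for any `X ∈ K` with
`P_V(X⁻¹) = C − A(y)`, `y ∈ ℝ^m`. -/
theorem stmt_15 {n m : ℕ} (V : Set (Fin n × Fin n)) [DecidablePred (· ∈ V)]
    (C : Matrix (Fin n) (Fin n) ℝ)
    (A : (Fin m → ℝ) →ₗ[ℝ] Matrix (Fin n) (Fin n) ℝ)
    (AT : Matrix (Fin n) (Fin n) ℝ →ₗ[ℝ] (Fin m → ℝ))
    (hadj : ∀ (y : Fin m → ℝ) (X : Matrix (Fin n) (Fin n) ℝ),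
      ((A y) * X).trace = y ⬝ᵥ AT X)
    (horth : ∀ y : Fin m → ℝ, AT (A y) = y)
    (hATC : AT C = 0)
    (g : (Fin m → ℝ) → ℝ)
    (hg : ∀ y : Fin m → ℝ, g y =
      -sInf {t : ℝ | ∃ X : Matrix (Fin n) (Fin n) ℝ, X.PosDef ∧
        (∀ i j : Fin n, (i, j) ∉ V → X i j = 0) ∧
        t = ((C - A y) * X).trace - Real.log X.det})
    (yhat : Fin m → ℝ) (Xhat : Matrix (Fin n) (Fin n) ℝ)
    (hXhatPD : Xhat.PosDef)
    (hXhatsupp : ∀ i j : Fin n, (i, j) ∉ V → Xhat i j = 0)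
    (hXhatproj : (Matrix.of fun i j : Fin n =>
      if (i, j) ∈ V then Xhat⁻¹ i j else 0) = C - A yhat)
    (hopt : ∀ y : Fin m → ℝ, g yhat ≤ g y) :
    AT Xhat = 0 ∧
      ∀ (y : Fin m → ℝ) (X : Matrix (Fin n) (Fin n) ℝ), X.PosDef →
        (∀ i j : Fin n, (i, j) ∉ V → X i j = 0) →
        (Matrix.of fun i j : Fin n => if (i, j) ∈ V then X⁻¹ i j else 0) = C - A y →
        (X⁻¹ * Xhat).trace = (n : ℝ) := by
  have hXH : Xhat.IsHermitian := hXhatPD.1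
  have hdetX : 0 < Xhat.det := hXhatPD.det_pos
  have hdetXu : IsUnit Xhat.det := hdetX.ne'.isUnit
  have tr1 : ∀ W : Matrix (Fin n) (Fin n) ℝ, W.IsHermitian →
      (∀ i j, (i, j) ∉ V → W i j = 0) →
      ((C - A yhat) * W).trace = (Xhat⁻¹ * W).trace := by
    intro W hW hWs
    rw [← hXhatproj, trace_pv_mul V _ W hW hWs]
  have trXX : (Xhat⁻¹ * Xhat).trace = (n : ℝ) := by
    rw [Matrix.nonsing_inv_mul _ hdetXu, Matrix.trace_one]; simp
  have trCX : ((C - A yhat) * Xhat).trace = (n : ℝ) := by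
    rw [tr1 Xhat hXH hXhatsupp, trXX]
  -- square root
  set S := (open scoped MatrixOrder in CFC.sqrt Xhat) with hSdef
  have hSH : S.IsHermitian := by open scoped MatrixOrder in exact (CFC.sqrt_nonneg Xhat).posSemidef.1
  have hSS : S * S = Xhat := by open scoped MatrixOrder in exact CFC.sqrt_mul_sqrt_self Xhat hXhatPD.posSemidef.nonneg
  have hdetS : IsUnit S.det := by
    have h : S.det * S.det = Xhat.det := by rw [← Matrix.det_mul, hSS]
    rcases eq_or_ne S.det 0 with h0 | h0
    · exfalso; rw [h0, zero_mul] at h; exact hdetX.ne' h.symm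
    · exact h0.isUnit
  have hSinvH : (S⁻¹).IsHermitian := hSH.inv
  have hXinv : Xhat⁻¹ = S⁻¹ * S⁻¹ := by rw [← hSS, Matrix.mul_inv_rev]
  -- direction
  set v := AT Xhat with hv
  set E := A (-v) with hE
  set Et := S * E * S with hEt
  set M := ∑ j, ∑ k, |Et j k| with hMdef
  have hM0 : 0 ≤ M :=
    Finset.sum_nonneg fun _ _ => Finset.sum_nonneg fun _ _ => abs_nonneg _
  have hEX : (E * Xhat).trace = -(v ⬝ᵥ v) := by
    rw [hE, hadj, neg_dotProduct]
  -- key bound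
  have key' : ∀ t : ℝ, 0 ≤ t → t * M ≤ 1/2 →
      ∀ W : Matrix (Fin n) (Fin n) ℝ, W.PosDef → (∀ i j, (i, j) ∉ V → W i j = 0) →
      (n : ℝ) - Real.log Xhat.det + t * (v ⬝ᵥ v) - 2 * t ^ 2 * M ^ 2 * n ≤
        ((C - A (yhat + t • (-v))) * W).trace - Real.log W.det := by
    intro t ht0 htM W hW hWs
    have hWH : W.IsHermitian := hW.1
    set K := S⁻¹ * W * S⁻¹ with hK
    have hKpd : K.PosDef := by
      have hu : IsUnit (S⁻¹) := Matrix.isUnit_nonsing_inv_iff.2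
        ((Matrix.isUnit_iff_isUnit_det _).2 hdetS)
      have := posDef_conj hW hu
      rwa [hSinvH.eq] at this
    have tEK : (Et * K).trace = (E * W).trace := by
      have h : Et * K = S * (E * (W * S⁻¹)) := by
        rw [hEt, hK]
        simp only [Matrix.mul_assoc]
        rw [Matrix.mul_nonsing_inv_cancel_left _ _ hdetS]
      rw [h, trace_mul_comm]
      simp only [Matrix.mul_assoc]
      rw [← Matrix.mul_assoc W, Matrix.nonsing_inv_mul_cancel_right _ _ hdetS]
    have tEt : Et.trace = -(v ⬝ᵥ v) := by
      rw [hEt, trace_mul_cycle, hSS, trace_mul_comm, hEX]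
    have tK : K.trace = (Xhat⁻¹ * W).trace := by
      rw [hK, trace_mul_cycle, ← hXinv]
    have hdetW : 0 < W.det := hW.det_pos
    have hdetK : Real.log K.det = Real.log W.det - Real.log Xhat.det := by
      have h1 : K.det = W.det / Xhat.det := by
        have hSd0 : S.det ≠ 0 := hdetS.ne_zero
        rw [hK, Matrix.det_mul, Matrix.det_mul, Matrix.det_nonsing_inv, ← hSS,
          Matrix.det_mul, Ring.inverse_eq_inv]
        field_simp
      rw [h1, Real.log_div hdetW.ne' hdetX.ne']
    have hkb := key_bound Et M t le_rfl ht0 htM hKpd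
    rw [tEK, tEt, tK, hdetK] at hkb
    have hAexp : C - A (yhat + t • (-v)) = (C - A yhat) - t • E := by
      rw [_root_.map_add, _root_.map_smul, ← hE]; abel
    rw [hAexp, sub_mul, Matrix.smul_mul, trace_sub, trace_smul, tr1 W hWH hWs]
    simp only [smul_eq_mul]
    linarith [hkb]
  -- value of g at yhat
  have hmem : ∀ y : Fin m → ℝ, ((C - A y) * Xhat).trace - Real.log Xhat.det ∈
      {t : ℝ | ∃ X : Matrix (Fin n) (Fin n) ℝ, X.PosDef ∧
        (∀ i j : Fin n, (i, j) ∉ V → X i j = 0) ∧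
        t = ((C - A y) * X).trace - Real.log X.det} :=
    fun y => ⟨Xhat, hXhatPD, hXhatsupp, rfl⟩
  have hlb0 : ∀ b ∈ {t : ℝ | ∃ X : Matrix (Fin n) (Fin n) ℝ, X.PosDef ∧
      (∀ i j : Fin n, (i, j) ∉ V → X i j = 0) ∧
      t = ((C - A yhat) * X).trace - Real.log X.det},
      (n : ℝ) - Real.log Xhat.det ≤ b := by
    rintro b ⟨W, hWpd, hWs, rfl⟩
    have h := key' 0 le_rfl (by simpa using one_half_pos.le) W hWpd hWs
    simpa using h
  have hgyhat : g yhat = Real.log Xhat.det - (n : ℝ) := by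
    rw [hg yhat]
    have h1 : sInf {t : ℝ | ∃ X : Matrix (Fin n) (Fin n) ℝ, X.PosDef ∧
        (∀ i j : Fin n, (i, j) ∉ V → X i j = 0) ∧
        t = ((C - A yhat) * X).trace - Real.log X.det} = (n : ℝ) - Real.log Xhat.det := by
      refine le_antisymm ?_ (le_csInf ⟨_, hmem yhat⟩ hlb0)
      have := hmem yhat
      rw [trCX] at this
      exact csInf_le ⟨_, hlb0⟩ this
    rw [h1]; ring
  -- first conclusion
  have hv0 : v = 0 := by
    by_contra hvne
    have hvv : 0 < v ⬝ᵥ v := by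
      rcases lt_or_eq_of_le (Finset.sum_nonneg fun i _ => mul_self_nonneg (v i) :
        (0:ℝ) ≤ v ⬝ᵥ v) with h | h
      · exact h
      · exact absurd (dotProduct_self_eq_zero.mp h.symm) hvne
    set t0 := min (1/(2*(M+1))) ((v ⬝ᵥ v)/(2*M^2*n + 1)) with ht0def
    have ht0pos : 0 < t0 := by
      apply lt_min
      · positivity
      · positivity
    have htM : t0 * M ≤ 1/2 := by
      have h1 : t0 ≤ 1/(2*(M+1)) := min_le_left _ _
      have h2 : 0 < 2*(M+1) := by linarith
      calc t0 * M ≤ (1/(2*(M+1))) * M := mul_le_mul_of_nonneg_right h1 hM0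
        _ ≤ 1/2 := by rw [div_mul_eq_mul_div, div_le_div_iff₀ h2 two_pos]; nlinarith
    have hlbt : ∀ b ∈ {t : ℝ | ∃ X : Matrix (Fin n) (Fin n) ℝ, X.PosDef ∧
        (∀ i j : Fin n, (i, j) ∉ V → X i j = 0) ∧
        t = ((C - A (yhat + t0 • (-v))) * X).trace - Real.log X.det},
        (n : ℝ) - Real.log Xhat.det + t0 * (v ⬝ᵥ v) - 2 * t0 ^ 2 * M ^ 2 * n ≤ b := by
      rintro b ⟨W, hWpd, hWs, rfl⟩
      exact key' t0 ht0pos.le htM W hWpd hWs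
    have hgle : g (yhat + t0 • (-v)) ≤
        -((n : ℝ) - Real.log Xhat.det + t0 * (v ⬝ᵥ v) - 2 * t0 ^ 2 * M ^ 2 * n) := by
      rw [hg]
      have := le_csInf ⟨_, hmem (yhat + t0 • (-v))⟩ hlbt
      linarith
    have h := hopt (yhat + t0 • (-v))
    rw [hgyhat] at h
    have hfin : t0 * (v ⬝ᵥ v) ≤ 2 * t0 ^ 2 * M ^ 2 * n := by linarith
    have ht0le : t0 ≤ (v ⬝ᵥ v)/(2*M^2*n + 1) := min_le_right _ _
    have hD : (0:ℝ) < 2*M^2*(n:ℝ) + 1 := by positivity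
    have heq : 2 * t0 ^ 2 * M ^ 2 * (n:ℝ) = t0 * (2*t0*M^2*n) := by ring
    have h2 : v ⬝ᵥ v ≤ 2*t0*M^2*(n:ℝ) := le_of_mul_le_mul_left (heq ▸ hfin) ht0pos
    have hnn : (0:ℝ) ≤ 2*M^2*(n:ℝ) := by positivity
    have h3 : 2*t0*M^2*(n:ℝ) ≤ 2*((v ⬝ᵥ v)/(2*M^2*(n:ℝ)+1))*M^2*(n:ℝ) := by
      calc 2*t0*M^2*(n:ℝ) = t0*(2*M^2*(n:ℝ)) := by ring
        _ ≤ ((v ⬝ᵥ v)/(2*M^2*(n:ℝ)+1))*(2*M^2*(n:ℝ)) := mul_le_mul_of_nonneg_right ht0le hnn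
        _ = 2*((v ⬝ᵥ v)/(2*M^2*(n:ℝ)+1))*M^2*(n:ℝ) := by ring
    have h4 : 2*((v ⬝ᵥ v)/(2*M^2*(n:ℝ)+1))*M^2*(n:ℝ) < v ⬝ᵥ v := by
      have he2 : 2*((v ⬝ᵥ v)/(2*M^2*(n:ℝ)+1))*M^2*(n:ℝ)
          = (v ⬝ᵥ v)*(2*M^2*(n:ℝ))/(2*M^2*(n:ℝ)+1) := by ring
      rw [he2, div_lt_iff₀ hD]
      nlinarith [hvv]
    exact lt_irrefl _ (lt_of_le_of_lt (h2.trans h3) h4)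
  refine ⟨hv0, ?_⟩
  intro y X hXpd hXs hXproj
  have hXinvH : (X⁻¹).IsHermitian := hXpd.1.inv
  have hAT0 : AT Xhat = 0 := by rw [← hv]; exact hv0
  have trAy : ∀ z : Fin m → ℝ, ((A z) * Xhat).trace = 0 := by
    intro z
    rw [hadj, hAT0]
    simp
  calc (X⁻¹ * Xhat).trace
      = ((Matrix.of fun i j : Fin n => if (i, j) ∈ V then X⁻¹ i j else 0) * Xhat).trace :=
        (trace_pv_mul V X⁻¹ Xhat hXH hXhatsupp).symm
    _ = ((C - A y) * Xhat).trace := by rw [hXproj]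
    _ = (C * Xhat).trace - ((A y) * Xhat).trace := by rw [sub_mul, trace_sub]
    _ = (C * Xhat).trace := by rw [trAy y]; ring
    _ = (n : ℝ) := by
        have h := trCX
        rw [sub_mul, trace_sub, trAy yhat] at h
        linarith
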